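/- Let β₁, β₂ ∈ ℝ and let E(β₁,β₂) = (1/5)[1 + β₁ + 2β₂ + 5β₁β₂ + α(β₁ + 3β₂ + 8β₁β₂)] with α = (1+√5)/2. If E(β₁,β₂) < 0, then f_n² + β₁f_{n+1}² + β₂f_{n+2}² + β₁β₂f_{n+3}² tends to −∞ as n → ∞. -/

import Mathlib

open Real

noncomputable def goldenα : ℝ := (1 + Real.sqrt 5) / 2

noncomputable def Efun (β₁ β₂ : ℝ) : ℝ :=
  (1 / 5) * (1 + β₁ + 2 * β₂ + 5 * β₁ * β₂ + goldenα * (β₁ + 3 * β₂ + 8 * β₁ * β₂))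

noncomputable def Cfun (β₁ β₂ : ℝ) : ℝ :=
  (1 / 5) * (1 + β₁ + 2 * β₂ + 5 * β₁ * β₂ + goldenConj * (β₁ + 3 * β₂ + 8 * β₁ * β₂))

noncomputable def Dfun (β₁ β₂ : ℝ) : ℝ := (-2 / 5) * (1 - β₁ + β₂ - β₁ * β₂)

lemma goldenα_eq : goldenα = goldenRatio := rfl

lemma key_identity (β₁ β₂ : ℝ) (n : ℕ) :
    (Nat.fib n : ℝ) ^ 2 + β₁ * (Nat.fib (n + 1) : ℝ) ^ 2
      + β₂ * (Nat.fib (n + 2) : ℝ) ^ 2 + β₁ * β₂ * (Nat.fib (n + 3) : ℝ) ^ 2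
    = Efun β₁ β₂ * (goldenRatio ^ n) ^ 2
      + Dfun β₁ β₂ * (goldenRatio ^ n * goldenConj ^ n)
      + Cfun β₁ β₂ * (goldenConj ^ n) ^ 2 := by
  have h5 : Real.sqrt 5 ^ 2 = 5 := Real.sq_sqrt (by norm_num)
  have hfib : ∀ k : ℕ, (Nat.fib k : ℝ) ^ 2 = (goldenRatio ^ k - goldenConj ^ k) ^ 2 / 5 := by
    intro k; rw [Real.coe_fib_eq, div_pow, h5]
  rw [hfib, hfib, hfib, hfib]
  simp only [pow_add, pow_one]
  set a := goldenRatio ^ n with ha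
  set b := goldenConj ^ n with hb
  have h2 : goldenRatio ^ 2 = goldenRatio + 1 := goldenRatio_sq
  have k2 : goldenConj ^ 2 = goldenConj + 1 := goldenConj_sq
  have hm : goldenRatio * goldenConj = -1 := goldenRatio_mul_goldenConj
  have h4 : goldenRatio ^ 4 = 3 * goldenRatio + 2 := by
    linear_combination (goldenRatio ^ 2 + goldenRatio + 2) * h2
  have h6 : goldenRatio ^ 6 = 8 * goldenRatio + 5 := by
    linear_combination (goldenRatio ^ 4 + goldenRatio ^ 3 + 2 * goldenRatio ^ 2
      + 3 * goldenRatio + 5) * h2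
  have k4 : goldenConj ^ 4 = 3 * goldenConj + 2 := by
    linear_combination (goldenConj ^ 2 + goldenConj + 2) * k2
  have k6 : goldenConj ^ 6 = 8 * goldenConj + 5 := by
    linear_combination (goldenConj ^ 4 + goldenConj ^ 3 + 2 * goldenConj ^ 2
      + 3 * goldenConj + 5) * k2
  have hm2 : goldenRatio ^ 2 * goldenConj ^ 2 = 1 := by
    linear_combination (goldenRatio * goldenConj - 1) * hm
  have hm3 : goldenRatio ^ 3 * goldenConj ^ 3 = -1 := by
    linear_combination (goldenRatio ^ 2 * goldenConj ^ 2 - goldenRatio * goldenConj + 1) * hm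
  unfold Efun Cfun Dfun
  rw [goldenα_eq]
  linear_combination (1/5) * (a ^ 2 * (β₁ * h2 + β₂ * h4 + β₁ * β₂ * h6)
    + b ^ 2 * (β₁ * k2 + β₂ * k4 + β₁ * β₂ * k6)
    - 2 * a * b * (β₁ * hm + β₂ * hm2 + β₁ * β₂ * hm3))

theorem norm_fib_quaternion_tendsto_atBot (β₁ β₂ : ℝ) (hE : Efun β₁ β₂ < 0) :
    Filter.Tendsto
      (fun n : ℕ => (Nat.fib n : ℝ) ^ 2 + β₁ * (Nat.fib (n + 1) : ℝ) ^ 2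
        + β₂ * (Nat.fib (n + 2) : ℝ) ^ 2 + β₁ * β₂ * (Nat.fib (n + 3) : ℝ) ^ 2)
      Filter.atTop Filter.atBot := by
  set E := Efun β₁ β₂
  set C := Cfun β₁ β₂
  set D := Dfun β₁ β₂
  have hψ1 : |goldenConj| < 1 := by
    rw [abs_lt]; exact ⟨neg_one_lt_goldenConj, goldenConj_neg.trans one_pos⟩
  -- bound for remainder
  have hbound : ∀ n : ℕ, (Nat.fib n : ℝ) ^ 2 + β₁ * (Nat.fib (n + 1) : ℝ) ^ 2
      + β₂ * (Nat.fib (n + 2) : ℝ) ^ 2 + β₁ * β₂ * (Nat.fib (n + 3) : ℝ) ^ 2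
      ≤ E * (goldenRatio ^ 2) ^ n + (|D| + |C|) := by
    intro n
    rw [key_identity β₁ β₂ n]
    have h1 : (goldenRatio ^ n) ^ 2 = (goldenRatio ^ 2) ^ n := by
      rw [← pow_mul, ← pow_mul, Nat.mul_comm]
    have h2 : D * (goldenRatio ^ n * goldenConj ^ n) ≤ |D| := by
      calc D * (goldenRatio ^ n * goldenConj ^ n) ≤ |D * (goldenRatio ^ n * goldenConj ^ n)| :=
          le_abs_self _
        _ = |D| * |goldenRatio * goldenConj| ^ n := by
          rw [abs_mul, ← mul_pow, abs_pow]
        _ = |D| := by rw [goldenRatio_mul_goldenConj, abs_neg, abs_one, one_pow, mul_one]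
    have h3 : C * (goldenConj ^ n) ^ 2 ≤ |C| := by
      calc C * (goldenConj ^ n) ^ 2 ≤ |C * (goldenConj ^ n) ^ 2| := le_abs_self _
        _ = |C| * (|goldenConj| ^ n) ^ 2 := by rw [abs_mul, abs_pow, abs_pow]
        _ ≤ |C| * 1 := by
          apply mul_le_mul_of_nonneg_left _ (abs_nonneg _)
          have : |goldenConj| ^ n ≤ 1 := pow_le_one₀ (abs_nonneg _) hψ1.le
          nlinarith [pow_nonneg (abs_nonneg goldenConj) n]
        _ = |C| := mul_one _
    rw [h1] at *
    linarith
  have hgold : Filter.Tendsto (fun n : ℕ => (goldenRatio ^ 2) ^ n) Filter.atTop Filter.atTop := by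
    apply tendsto_pow_atTop_atTop_of_one_lt
    nlinarith [one_lt_goldenRatio]
  have hmain : Filter.Tendsto (fun n : ℕ => E * (goldenRatio ^ 2) ^ n + (|D| + |C|))
      Filter.atTop Filter.atBot := by
    apply Filter.tendsto_atBot_add_const_right
    exact Filter.Tendsto.const_mul_atTop_of_neg hE hgold
  exact Filter.tendsto_atBot_mono hbound hmain
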